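/- Let C be a category with finite products, G an internal group, and S an object of C with trivial G-action π_2. For any object Y of C and any G-object (X, a), there is a bijection, natural in Y and (X,a), between natural transformations S^X → S^Y (as presheaves on C) and natural transformations (S, π_2)^{(X,a)} → (S, π_2)^{(G × Y, m × Id_Y)} (as presheaves on [G, C]). -/

import Mathlib

open CategoryTheory CategoryTheory.Limits

universe u v

variable {C : Type u} [Category.{v} C] [HasFiniteProducts C]


/-- The presheaf `S^X : Y ↦ C(Y × X, S)`. -/
noncomputable def pow (S X : C) : Cᵒᵖ ⥤ Type v where
  obj Z := (Opposite.unop Z ⨯ X) ⟶ S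
  map f := TypeCat.ofHom fun u => prod.map f.unop (𝟙 X) ≫ u
  map_id Z := by ext u; simp
  map_comp f g := by
    ext u
    show prod.map ((f ≫ g).unop) (𝟙 X) ≫ u
      = prod.map g.unop (𝟙 X) ≫ prod.map f.unop (𝟙 X) ≫ u
    rw [← Category.assoc, prod.map_map]; simp

/-- Contravariant action `S^f : S^Y ⟶ S^X` for `f : X ⟶ Y`. -/
noncomputable def powMap (S : C) {X Y : C} (f : X ⟶ Y) : pow S Y ⟶ pow S X where
  app Z := TypeCat.ofHom fun u => prod.map (𝟙 _) f ≫ u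
  naturality Z W g := by
    ext u
    change Opposite.unop Z ⨯ Y ⟶ S at u
    show prod.map (𝟙 _) f ≫ prod.map g.unop (𝟙 Y) ≫ u
      = prod.map g.unop (𝟙 X) ≫ prod.map (𝟙 _) f ≫ u
    rw [← Category.assoc, ← Category.assoc, prod.map_map, prod.map_map]
    simp

@[simp] lemma powMap_id (S X : C) : powMap S (𝟙 X) = 𝟙 (pow S X) := by
  apply NatTrans.ext; funext Z; ext u; simp [powMap, pow]; rfl

@[simp] lemma powMap_comp (S : C) {X Y Z : C} (f : X ⟶ Y) (g : Y ⟶ Z) :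
    powMap S (f ≫ g) = powMap S g ≫ powMap S f := by
  apply NatTrans.ext; funext W; ext u
  change Opposite.unop W ⨯ Z ⟶ S at u
  show prod.map (𝟙 _) (f ≫ g) ≫ u = prod.map (𝟙 _) f ≫ prod.map (𝟙 _) g ≫ u
  rw [← Category.assoc, prod.map_map]; simp

/-- An internal group in a category with finite products. -/
structure GroupObject (C : Type u) [Category.{v} C] [HasFiniteProducts C] where
  G : C
  m : G ⨯ G ⟶ G
  e : ⊤_ C ⟶ G
  i : G ⟶ G
  mul_assoc : prod.map m (𝟙 G) ≫ m = (prod.associator G G G).hom ≫ prod.map (𝟙 G) m ≫ m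
  one_mul : prod.lift (terminal.from G ≫ e) (𝟙 G) ≫ m = 𝟙 G
  mul_one : prod.lift (𝟙 G) (terminal.from G ≫ e) ≫ m = 𝟙 G
  inv_mul : prod.lift i (𝟙 G) ≫ m = terminal.from G ≫ e
  mul_inv : prod.lift (𝟙 G) i ≫ m = terminal.from G ≫ e

variable (Gr : GroupObject C)

/-- A `G`-object: an object with a `G`-action. -/
structure GObject (Gr : GroupObject C) where
  X : C
  act : Gr.G ⨯ X ⟶ X
  act_one : prod.lift (terminal.from X ≫ Gr.e) (𝟙 X) ≫ act = 𝟙 X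
  act_mul : prod.map (𝟙 Gr.G) act ≫ act
    = (prod.associator Gr.G Gr.G X).inv ≫ prod.map Gr.m (𝟙 X) ≫ act

/-- A `G`-equivariant morphism. -/
@[ext]
structure GHom (A B : GObject Gr) where
  f : A.X ⟶ B.X
  equivariant : A.act ≫ f = prod.map (𝟙 Gr.G) f ≫ B.act

instance : Category (GObject Gr) where
  Hom A B := GHom Gr A B
  id A := ⟨𝟙 A.X, by simp⟩
  comp {A B D} u v := ⟨u.f ≫ v.f, by
    rw [← Category.assoc, u.equivariant, Category.assoc, v.equivariant,
      ← Category.assoc, prod.map_map]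
    simp⟩
  id_comp u := by apply GHom.ext; simp
  comp_id u := by apply GHom.ext; simp
  assoc u v w := by apply GHom.ext; simp

@[simp] lemma GHom.id_f (A : GObject Gr) : (𝟙 A : A ⟶ A).f = 𝟙 A.X := rfl
@[simp] lemma GHom.comp_f {A B D : GObject Gr} (u : A ⟶ B) (v : B ⟶ D) :
    (u ≫ v).f = u.f ≫ v.f := rfl

/-- The diagonal action on the product of the underlying objects of two `G`-objects. -/
noncomputable def productAction (Z Xa : GObject Gr) :
    Gr.G ⨯ (Z.X ⨯ Xa.X) ⟶ Z.X ⨯ Xa.X :=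
  prod.lift (prod.map (𝟙 Gr.G) prod.fst ≫ Z.act) (prod.map (𝟙 Gr.G) prod.snd ≫ Xa.act)

lemma productAction_natural_left {Z W : GObject Gr} (g : W ⟶ Z) (Xa : GObject Gr) :
    prod.map (𝟙 Gr.G) (prod.map g.f (𝟙 Xa.X)) ≫ productAction Gr Z Xa
      = productAction Gr W Xa ≫ prod.map g.f (𝟙 Xa.X) := by
  unfold productAction
  apply Limits.prod.hom_ext
  · simp only [Category.assoc, prod.map_fst, prod.lift_fst, prod.lift_fst_assoc,
      prod.map_fst_assoc]
    rw [g.equivariant, ← Category.assoc, ← Category.assoc, prod.map_map, prod.map_map]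
    simp
  · simp only [Category.assoc, prod.map_snd, prod.lift_snd, prod.lift_snd_assoc,
      prod.map_snd_assoc]
    rw [← Category.assoc, prod.map_map]
    simp

lemma productAction_natural_right (Z : GObject Gr) {Xa Xb : GObject Gr} (k : Xa ⟶ Xb) :
    prod.map (𝟙 Gr.G) (prod.map (𝟙 Z.X) k.f) ≫ productAction Gr Z Xb
      = productAction Gr Z Xa ≫ prod.map (𝟙 Z.X) k.f := by
  unfold productAction
  apply Limits.prod.hom_ext
  · simp only [Category.assoc, prod.map_fst, prod.lift_fst, prod.lift_fst_assoc,
      prod.map_fst_assoc]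
    rw [← Category.assoc, prod.map_map]
    simp
  · simp only [Category.assoc, prod.map_snd, prod.lift_snd, prod.lift_snd_assoc,
      prod.map_snd_assoc]
    rw [k.equivariant, ← Category.assoc, ← Category.assoc, prod.map_map, prod.map_map]
    simp

/-- The object of `G`-equivariant maps `(S,π₂)^{(X,a)}` as a presheaf on `[G,C]`,
where `S` carries the trivial action. -/
noncomputable def gpow (S : C) (Xa : GObject Gr) : (GObject Gr)ᵒᵖ ⥤ Type v where
  obj Z := { u : (Opposite.unop Z).X ⨯ Xa.X ⟶ S //
      productAction Gr (Opposite.unop Z) Xa ≫ u = prod.snd ≫ u }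
  map {Z W} g := TypeCat.ofHom fun u => ⟨prod.map g.unop.f (𝟙 Xa.X) ≫ u.1, by
    rw [← Category.assoc, ← productAction_natural_left, Category.assoc, u.2,
      ← Category.assoc, prod.map_snd, Category.assoc]⟩
  map_id Z := by ext u; simp
  map_comp f g := by
    ext u
    show prod.map (g.unop.f ≫ f.unop.f) (𝟙 Xa.X) ≫ u.1
      = prod.map g.unop.f (𝟙 Xa.X) ≫ prod.map f.unop.f (𝟙 Xa.X) ≫ u.1
    rw [← Category.assoc, prod.map_map]; simp

/-- Contravariant action of a `G`-homomorphism on `gpow`. -/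
noncomputable def gpowMap (S : C) {Xa Xb : GObject Gr} (k : Xa ⟶ Xb) :
    gpow Gr S Xb ⟶ gpow Gr S Xa where
  app Z := TypeCat.ofHom fun u => ⟨prod.map (𝟙 (Opposite.unop Z).X) k.f ≫ u.1, by
    rw [← Category.assoc, ← productAction_natural_right, Category.assoc, u.2,
      ← Category.assoc, prod.map_snd, Category.assoc]⟩
  naturality Z W g := by
    ext u; apply Subtype.ext
    show prod.map (𝟙 _) k.f ≫ prod.map g.unop.f (𝟙 Xb.X) ≫ u.1
      = prod.map g.unop.f (𝟙 Xa.X) ≫ prod.map (𝟙 _) k.f ≫ u.1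
    rw [← Category.assoc, ← Category.assoc, prod.map_map, prod.map_map]
    simp

lemma freeGObject_act_one (Gr : GroupObject C) (Y : C) :
   prod.lift (terminal.from (Gr.G ⨯ Y) ≫ Gr.e) (𝟙 (Gr.G ⨯ Y)) ≫
     ((prod.associator Gr.G Gr.G Y).inv ≫ prod.map Gr.m (𝟙 Y)) = 𝟙 (Gr.G ⨯ Y) := by
  have hfrom : terminal.from (Gr.G ⨯ Y) = (prod.fst : Gr.G ⨯ Y ⟶ Gr.G) ≫ terminal.from Gr.G :=
    Subsingleton.elim _ _
  apply Limits.prod.hom_ext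
  · simp only [prod.associator_inv, Category.assoc, prod.map_fst, prod.lift_fst,
      prod.comp_lift_assoc, prod.comp_lift, Category.comp_id, Category.id_comp,
      prod.lift_fst_assoc, prod.lift_snd, prod.lift_snd_assoc]
    rw [hfrom, Category.assoc]
    have key : (prod.fst : Gr.G ⨯ Y ⟶ Gr.G) ≫ prod.lift (terminal.from Gr.G ≫ Gr.e) (𝟙 Gr.G) ≫ Gr.m
        = prod.fst ≫ 𝟙 Gr.G := by rw [Gr.one_mul]
    rw [prod.comp_lift_assoc] at key
    simpa using key
  · simp only [prod.associator_inv, Category.assoc, prod.map_snd, prod.lift_snd,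
      prod.comp_lift_assoc, prod.comp_lift, Category.comp_id, Category.id_comp,
      prod.lift_snd_assoc]

lemma mul_assoc_elements (Gr : GroupObject C) {W : C} (x y z : W ⟶ Gr.G) :
    prod.lift (prod.lift x y ≫ Gr.m) z ≫ Gr.m = prod.lift x (prod.lift y z ≫ Gr.m) ≫ Gr.m := by
  have h := congrArg (fun k => prod.lift (prod.lift x y) z ≫ k) Gr.mul_assoc
  simpa [prod.lift_map, prod.associator_hom, prod.comp_lift, prod.comp_lift_assoc,
    Category.assoc, prod.lift_fst, prod.lift_snd, prod.lift_fst_assoc,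
    prod.lift_snd_assoc] using h

lemma freeGObject_act_mul (Gr : GroupObject C) (Y : C) :
    prod.map (𝟙 Gr.G) ((prod.associator Gr.G Gr.G Y).inv ≫ prod.map Gr.m (𝟙 Y)) ≫
        ((prod.associator Gr.G Gr.G Y).inv ≫ prod.map Gr.m (𝟙 Y))
      = (prod.associator Gr.G Gr.G (Gr.G ⨯ Y)).inv ≫ prod.map Gr.m (𝟙 (Gr.G ⨯ Y)) ≫
        ((prod.associator Gr.G Gr.G Y).inv ≫ prod.map Gr.m (𝟙 Y)) := by
  apply Limits.prod.hom_ext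
  · simp only [prod.associator_inv, Category.assoc, prod.map_fst, prod.map_snd,
      prod.lift_fst, prod.lift_snd, prod.comp_lift_assoc, prod.comp_lift,
      Category.comp_id, Category.id_comp, prod.lift_fst_assoc, prod.lift_snd_assoc,
      prod.lift_map, prod.map_map, prod.map_fst_assoc, prod.map_snd_assoc]
    rw [mul_assoc_elements]
  · simp only [prod.associator_inv, Category.assoc, prod.map_fst, prod.map_snd,
      prod.lift_fst, prod.lift_snd, prod.comp_lift_assoc, prod.comp_lift,
      Category.comp_id, Category.id_comp, prod.lift_fst_assoc, prod.lift_snd_assoc,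
      prod.lift_map, prod.map_map, prod.map_fst_assoc, prod.map_snd_assoc]

/-- The free `G`-object `(G × Y, m × Id_Y)` on an object `Y`. -/
noncomputable def freeGObject (Gr : GroupObject C) (Y : C) : GObject Gr where
  X := Gr.G ⨯ Y
  act := (prod.associator Gr.G Gr.G Y).inv ≫ prod.map Gr.m (𝟙 Y)
  act_one := freeGObject_act_one Gr Y
  act_mul := freeGObject_act_mul Gr Y

/-- The free `G`-homomorphism `G × Y ⟶ G × Y'` on `h : Y ⟶ Y'`. -/
noncomputable def freeGHom (Gr : GroupObject C) {Y Y' : C} (h : Y ⟶ Y') :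
    freeGObject Gr Y ⟶ freeGObject Gr Y' where
  f := prod.map (𝟙 Gr.G) h
  equivariant := by
    show ((prod.associator Gr.G Gr.G Y).inv ≫ prod.map Gr.m (𝟙 Y)) ≫ prod.map (𝟙 Gr.G) h
      = prod.map (𝟙 Gr.G) (prod.map (𝟙 Gr.G) h) ≫
        (prod.associator Gr.G Gr.G Y').inv ≫ prod.map Gr.m (𝟙 Y')
    apply Limits.prod.hom_ext
    · simp [prod.associator_inv, prod.comp_lift, prod.comp_lift_assoc, prod.lift_map,
        prod.map_fst_assoc, prod.map_snd_assoc, prod.map_map]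
    · simp [prod.associator_inv, prod.comp_lift, prod.comp_lift_assoc, prod.lift_map,
        prod.map_fst_assoc, prod.map_snd_assoc, prod.map_map]

attribute [local simp] prod.lift_fst prod.lift_snd prod.lift_fst_assoc prod.lift_snd_assoc


/-! ### Auxiliary: generalized-element calculus -/

section Aux

variable {Gr}

/-- Multiplication of generalized elements of `G`. -/
noncomputable def gmul {W : C} (x y : W ⟶ Gr.G) : W ⟶ Gr.G := prod.lift x y ≫ Gr.m

/-- The unit generalized element of `G`. -/
noncomputable def gone (Gr : GroupObject C) (W : C) : W ⟶ Gr.G := terminal.from W ≫ Gr.e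

/-- Inversion of generalized elements of `G`. -/
noncomputable def ginv {W : C} (x : W ⟶ Gr.G) : W ⟶ Gr.G := x ≫ Gr.i

@[simp] lemma comp_gmul {W W' : C} (f : W' ⟶ W) (x y : W ⟶ Gr.G) :
    f ≫ gmul x y = gmul (f ≫ x) (f ≫ y) := by
  simp [gmul, prod.comp_lift_assoc]

@[simp] lemma comp_gone {W W' : C} (f : W' ⟶ W) :
    f ≫ gone Gr W = gone Gr W' := by
  simp [gone, ← Category.assoc]

@[simp] lemma comp_ginv {W W' : C} (f : W' ⟶ W) (x : W ⟶ Gr.G) :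
    f ≫ ginv x = ginv (f ≫ x) := by simp [ginv]

lemma g_one_mul {W : C} (x : W ⟶ Gr.G) : gmul (gone Gr W) x = x := by
  have h := congrArg (fun k => x ≫ k) Gr.one_mul
  simp only [Category.comp_id, prod.comp_lift_assoc, Category.assoc] at h
  have hx : x ≫ terminal.from Gr.G = terminal.from W := Subsingleton.elim _ _
  rw [← Category.assoc, hx] at h
  simpa [gmul, gone] using h

lemma g_mul_one {W : C} (x : W ⟶ Gr.G) : gmul x (gone Gr W) = x := by
  have h := congrArg (fun k => x ≫ k) Gr.mul_one
  simp only [Category.comp_id, prod.comp_lift_assoc, Category.assoc] at h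
  have hx : x ≫ terminal.from Gr.G = terminal.from W := Subsingleton.elim _ _
  rw [← Category.assoc, hx] at h
  simpa [gmul, gone] using h

lemma g_inv_mul {W : C} (x : W ⟶ Gr.G) : gmul (ginv x) x = gone Gr W := by
  have h := congrArg (fun k => x ≫ k) Gr.inv_mul
  simp only [prod.comp_lift_assoc, Category.assoc, Category.comp_id] at h
  have hx : x ≫ terminal.from Gr.G = terminal.from W := Subsingleton.elim _ _
  rw [← Category.assoc, hx] at h
  simpa [gmul, ginv, gone] using h

lemma g_mul_inv {W : C} (x : W ⟶ Gr.G) : gmul x (ginv x) = gone Gr W := by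
  have h := congrArg (fun k => x ≫ k) Gr.mul_inv
  simp only [prod.comp_lift_assoc, Category.assoc, Category.comp_id] at h
  have hx : x ≫ terminal.from Gr.G = terminal.from W := Subsingleton.elim _ _
  rw [← Category.assoc, hx] at h
  simpa [gmul, ginv, gone] using h

/-- The generalized elements of `G` form a group. -/
noncomputable def homGroup (Gr : GroupObject C) (W : C) : Group (W ⟶ Gr.G) where
  mul x y := gmul x y
  one := gone Gr W
  inv x := ginv x
  mul_assoc := mul_assoc_elements Gr
  one_mul := g_one_mul
  mul_one := g_mul_one
  inv_mul_cancel := g_inv_mul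

lemma g_key {W : C} (x y : W ⟶ Gr.G) :
    gmul (ginv (gmul x y)) x = ginv y := by
  letI : Group (W ⟶ Gr.G) := homGroup Gr W
  show ((x * y)⁻¹ * x : W ⟶ Gr.G) = y⁻¹
  rw [mul_inv_rev, mul_assoc, inv_mul_cancel, mul_one]

lemma g_inv_one {W : C} : ginv (gone Gr W) = gone Gr W := by
  letI : Group (W ⟶ Gr.G) := homGroup Gr W
  show ((1 : W ⟶ Gr.G)⁻¹) = 1
  exact inv_one

end Aux


section Aux2

variable {Gr}

/-- Action of a generalized element of `G` on a generalized element of a `G`-object. -/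
noncomputable def actEl (Z : GObject Gr) {W : C} (g : W ⟶ Gr.G) (z : W ⟶ Z.X) : W ⟶ Z.X :=
  prod.lift g z ≫ Z.act

@[simp] lemma comp_actEl (Z : GObject Gr) {W W' : C} (f : W' ⟶ W) (g : W ⟶ Gr.G) (z : W ⟶ Z.X) :
    f ≫ actEl Z g z = actEl Z (f ≫ g) (f ≫ z) := by
  simp [actEl, prod.comp_lift_assoc]

@[simp] lemma actEl_one (Z : GObject Gr) {W : C} (z : W ⟶ Z.X) :
    actEl Z (gone Gr W) z = z := by
  have h := congrArg (fun k => z ≫ k) Z.act_one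
  simp only [Category.comp_id, prod.comp_lift_assoc, Category.assoc] at h
  have hx : z ≫ terminal.from Z.X = terminal.from W := Subsingleton.elim _ _
  rw [← Category.assoc, hx] at h
  simpa [actEl, gone] using h

@[simp] lemma actEl_mul (Z : GObject Gr) {W : C} (g g' : W ⟶ Gr.G) (z : W ⟶ Z.X) :
    actEl Z g (actEl Z g' z) = actEl Z (gmul g g') z := by
  have h := congrArg (fun k => prod.lift g (prod.lift g' z) ≫ k) Z.act_mul
  simp only [prod.comp_lift_assoc, Category.assoc, prod.lift_map, prod.associator_inv,
    prod.comp_lift, prod.lift_fst, prod.lift_snd, prod.lift_fst_assoc, prod.lift_snd_assoc,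
    prod.lift_map_assoc, Category.comp_id, Category.id_comp] at h
  simp only [actEl, gmul, prod.comp_lift_assoc]
  convert h using 2 <;> simp [prod.comp_lift]

lemma actEl_hom {Z Z' : GObject Gr} (k : Z ⟶ Z') {W : C} (g : W ⟶ Gr.G) (z : W ⟶ Z.X) :
    actEl Z g z ≫ k.f = actEl Z' g (z ≫ k.f) := by
  have h := congrArg (fun q => prod.lift g z ≫ q) k.equivariant
  simpa [actEl, prod.comp_lift_assoc, prod.lift_map_assoc] using h

lemma actEl_free {c W : C} (g : W ⟶ Gr.G) (p : W ⟶ Gr.G ⨯ c) :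
    actEl (freeGObject Gr c) g p
      = prod.lift (gmul g (p ≫ prod.fst)) (p ≫ prod.snd) := by
  show prod.lift g p ≫ ((prod.associator Gr.G Gr.G c).inv ≫ prod.map Gr.m (𝟙 c)) = _
  simp [actEl, freeGObject, gmul, prod.comp_lift_assoc, prod.associator_inv, prod.comp_lift,
    prod.lift_map]

@[simp] lemma comp_productAction {Z Xa : GObject Gr} {W : C}
    (t : W ⟶ Gr.G ⨯ (Z.X ⨯ Xa.X)) :
    t ≫ productAction Gr Z Xa
      = prod.lift (actEl Z (t ≫ prod.fst) (t ≫ prod.snd ≫ prod.fst))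
          (actEl Xa (t ≫ prod.fst) (t ≫ prod.snd ≫ prod.snd)) := by
  simp only [productAction, actEl, prod.comp_lift]
  congr 1 <;> rw [← Category.assoc] <;> congr 1 <;>
    apply Limits.prod.hom_ext <;> simp

/-- Equivariance in terms of generalized elements. -/
lemma equiv_el {Z Xa : GObject Gr} {S : C} {u : Z.X ⨯ Xa.X ⟶ S}
    (hu : productAction Gr Z Xa ≫ u = prod.snd ≫ u)
    {W : C} (g : W ⟶ Gr.G) (z : W ⟶ Z.X) (x : W ⟶ Xa.X) :
    prod.lift (actEl Z g z) (actEl Xa g x) ≫ u = prod.lift z x ≫ u := by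
  have h := congrArg (fun k => prod.lift g (prod.lift z x) ≫ k) hu
  simp only [← Category.assoc] at h
  rw [comp_productAction] at h
  simpa using h

/-- Generalized-element extensionality. -/
lemma ext_el {P Q : C} {f g : P ⟶ Q}
    (h : ∀ (W : C) (t : W ⟶ P), t ≫ f = t ≫ g) : f = g := by
  simpa using h P (𝟙 P)

end Aux2


section Aux3

variable {Gr}

/-- `(z,(g,y)) ↦ (g⁻¹·z, y)`. -/
noncomputable def alphaMap (Z : GObject Gr) (Y : C) : Z.X ⨯ (Gr.G ⨯ Y) ⟶ Z.X ⨯ Y :=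
  prod.lift (prod.lift (prod.snd ≫ prod.fst ≫ Gr.i) prod.fst ≫ Z.act)
    (prod.snd ≫ prod.snd)

@[simp] lemma comp_alphaMap {Z : GObject Gr} {Y W : C} (t : W ⟶ Z.X ⨯ (Gr.G ⨯ Y)) :
    t ≫ alphaMap Z Y
      = prod.lift (actEl Z (ginv (t ≫ prod.snd ≫ prod.fst)) (t ≫ prod.fst))
          (t ≫ prod.snd ≫ prod.snd) := by
  apply Limits.prod.hom_ext
  · simp only [alphaMap, Category.assoc, prod.lift_fst, actEl, ginv]
    rw [← Category.assoc]; congr 1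
    apply Limits.prod.hom_ext <;> simp
  · simp [alphaMap]

/-- `((g,z),x) ↦ (z, g⁻¹·x)`. -/
noncomputable def betaMap (c : C) (Xa : GObject Gr) : (Gr.G ⨯ c) ⨯ Xa.X ⟶ c ⨯ Xa.X :=
  prod.lift (prod.fst ≫ prod.snd)
    (prod.lift (prod.fst ≫ prod.fst ≫ Gr.i) prod.snd ≫ Xa.act)

@[simp] lemma comp_betaMap {c : C} {Xa : GObject Gr} {W : C} (t : W ⟶ (Gr.G ⨯ c) ⨯ Xa.X) :
    t ≫ betaMap c Xa
      = prod.lift (t ≫ prod.fst ≫ prod.snd)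
          (actEl Xa (ginv (t ≫ prod.fst ≫ prod.fst)) (t ≫ prod.snd)) := by
  apply Limits.prod.hom_ext
  · simp [betaMap]
  · simp only [betaMap, Category.assoc, prod.lift_snd, actEl, ginv]
    rw [← Category.assoc]; congr 1
    apply Limits.prod.hom_ext <;> simp

/-- `(z,y) ↦ ((e,z),(e,y))`. -/
noncomputable def gammaMap (Gr : GroupObject C) (c Y : C) :
    c ⨯ Y ⟶ (Gr.G ⨯ c) ⨯ (Gr.G ⨯ Y) :=
  prod.lift (prod.lift (gone Gr _) prod.fst) (prod.lift (gone Gr _) prod.snd)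

@[simp] lemma comp_gammaMap {c Y W : C} (t : W ⟶ c ⨯ Y) :
    t ≫ gammaMap Gr c Y
      = prod.lift (prod.lift (gone Gr W) (t ≫ prod.fst))
          (prod.lift (gone Gr W) (t ≫ prod.snd)) := by
  simp [gammaMap, prod.comp_lift]

@[simp] lemma lift_proj {A B W : C} (s : W ⟶ A ⨯ B) :
    prod.lift (s ≫ prod.fst) (s ≫ prod.snd) = s := by
  apply Limits.prod.hom_ext <;> simp

/-- `comp_productAction` specialized to a free object on the right, with clean types. -/
lemma comp_productAction_freeR {Z : GObject Gr} {Y W : C}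
    (t : W ⟶ Gr.G ⨯ (Z.X ⨯ (Gr.G ⨯ Y))) :
    t ≫ productAction Gr Z (freeGObject Gr Y)
      = (prod.lift (actEl Z (t ≫ prod.fst) (t ≫ prod.snd ≫ prod.fst))
          (prod.lift (gmul (t ≫ prod.fst) (t ≫ prod.snd ≫ prod.snd ≫ prod.fst))
            (t ≫ prod.snd ≫ prod.snd ≫ prod.snd)) : W ⟶ Z.X ⨯ (Gr.G ⨯ Y)) := by
  have h := comp_productAction (Z := Z) (Xa := freeGObject Gr Y) t
  erw [actEl_free] at h
  dsimp only [freeGObject] at h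
  try simp only [Category.assoc] at h
  exact h

/-- `comp_productAction` specialized to a free object on the left, with clean types. -/
lemma comp_productAction_freeL {c : C} {Xa : GObject Gr} {W : C}
    (t : W ⟶ Gr.G ⨯ ((Gr.G ⨯ c) ⨯ Xa.X)) :
    t ≫ productAction Gr (freeGObject Gr c) Xa
      = (prod.lift
          (prod.lift (gmul (t ≫ prod.fst) (t ≫ prod.snd ≫ prod.fst ≫ prod.fst))
            (t ≫ prod.snd ≫ prod.fst ≫ prod.snd))
          (actEl Xa (t ≫ prod.fst) (t ≫ prod.snd ≫ prod.snd))
            : W ⟶ (Gr.G ⨯ c) ⨯ Xa.X) := by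
  have h := comp_productAction (Z := freeGObject Gr c) (Xa := Xa) t
  erw [actEl_free] at h
  dsimp only [freeGObject] at h
  try simp only [Category.assoc] at h
  exact h

/-- `comp_alphaMap` specialized to a free object, with clean types. -/
lemma comp_alphaMap_free {c Y W : C} (t : W ⟶ (Gr.G ⨯ c) ⨯ (Gr.G ⨯ Y)) :
    t ≫ alphaMap (freeGObject Gr c) Y
      = (prod.lift
          (prod.lift (gmul (ginv (t ≫ prod.snd ≫ prod.fst)) (t ≫ prod.fst ≫ prod.fst))
            (t ≫ prod.fst ≫ prod.snd))
          (t ≫ prod.snd ≫ prod.snd) : W ⟶ (Gr.G ⨯ c) ⨯ Y) := by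
  have h := comp_alphaMap (Z := freeGObject Gr c) (Y := Y) t
  erw [actEl_free] at h
  dsimp only [freeGObject] at h
  try simp only [Category.assoc] at h
  exact h

/-- Equivariance elements for maps out of `Z × (G × Y)`, clean types. -/
lemma equiv_el_free {Z : GObject Gr} {Y S : C} {w : Z.X ⨯ (Gr.G ⨯ Y) ⟶ S}
    (hw : productAction Gr Z (freeGObject Gr Y) ≫ w = prod.snd ≫ w)
    {W : C} (g : W ⟶ Gr.G) (z : W ⟶ Z.X) (p : W ⟶ Gr.G ⨯ Y) :
    prod.lift (actEl Z g z) (prod.lift (gmul g (p ≫ prod.fst)) (p ≫ prod.snd)) ≫ w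
      = prod.lift z p ≫ w := by
  have h := equiv_el (Xa := freeGObject Gr Y) hw g z p
  erw [actEl_free] at h
  dsimp only [freeGObject] at h
  try simp only [Category.assoc] at h
  exact h

/-- L1: `alphaMap` intertwines the diagonal action with the trivial one. -/
lemma alpha_equiv (Z : GObject Gr) (Y : C) :
    productAction Gr Z (freeGObject Gr Y) ≫ alphaMap Z Y
      = prod.snd ≫ alphaMap Z Y := by
  apply ext_el; intro W t
  dsimp only [freeGObject] at t ⊢
  simp only [← Category.assoc]
  erw [comp_productAction_freeR, comp_alphaMap, comp_alphaMap]
  simp [g_key]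

/-- L2: naturality of `alphaMap` in the `G`-object. -/
lemma alpha_natural {Z W : GObject Gr} (g : W ⟶ Z) (Y : C) :
    prod.map g.f (𝟙 (Gr.G ⨯ Y)) ≫ alphaMap Z Y
      = alphaMap W Y ≫ prod.map g.f (𝟙 Y) := by
  apply ext_el; intro V t
  simp only [← Category.assoc]
  rw [comp_alphaMap, comp_alphaMap]
  simp [actEl_hom, prod.comp_lift]

/-- L3: `betaMap` intertwines the diagonal action with the trivial one. -/
lemma beta_equiv (c : C) (Xa : GObject Gr) :
    productAction Gr (freeGObject Gr c) Xa ≫ betaMap c Xa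
      = prod.snd ≫ betaMap c Xa := by
  apply ext_el; intro W t
  dsimp only [freeGObject] at t ⊢
  simp only [← Category.assoc]
  erw [comp_productAction_freeL, comp_betaMap, comp_betaMap]
  simp [g_key]

/-- L4: naturality of `betaMap` in `c`. -/
lemma beta_natural {c c' : C} (f : c' ⟶ c) (Xa : GObject Gr) :
    prod.map (prod.map (𝟙 Gr.G) f) (𝟙 Xa.X) ≫ betaMap c Xa
      = betaMap c' Xa ≫ prod.map f (𝟙 Xa.X) := by
  apply ext_el; intro V t
  simp only [← Category.assoc]
  rw [comp_betaMap, comp_betaMap]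
  simp [prod.comp_lift]

/-- L5: `betaMap` is split by the unit. -/
lemma beta_section (c : C) (Xa : GObject Gr) :
    prod.map (prod.lift (gone Gr c) (𝟙 c)) (𝟙 Xa.X) ≫ betaMap c Xa = 𝟙 (c ⨯ Xa.X) := by
  apply ext_el; intro W t
  simp only [← Category.assoc]
  rw [comp_betaMap]
  simp [prod.comp_lift, g_inv_one]

/-- L6: `gammaMap` followed by `alphaMap` on a free object is the unit. -/
lemma gamma_alpha (c Y : C) :
    gammaMap Gr c Y ≫ alphaMap (freeGObject Gr c) Y
      = prod.map (prod.lift (gone Gr c) (𝟙 c)) (𝟙 Y) := by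
  apply ext_el; intro W t
  dsimp only [freeGObject] at t ⊢
  simp only [← Category.assoc]
  erw [comp_gammaMap, comp_alphaMap_free]
  simp only [prod.lift_fst, prod.lift_snd, prod.lift_fst_assoc, prod.lift_snd_assoc,
    g_inv_one, g_one_mul]
  apply Limits.prod.hom_ext <;> simp [prod.comp_lift]

/-- L7: on equivariant maps, `betaMap` agrees with the action. -/
lemma beta_act {Z Xa : GObject Gr} {S : C} {u : Z.X ⨯ Xa.X ⟶ S}
    (hu : productAction Gr Z Xa ≫ u = prod.snd ≫ u) :
    betaMap Z.X Xa ≫ u = prod.map Z.act (𝟙 Xa.X) ≫ u := by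
  apply ext_el; intro W t
  simp only [← Category.assoc]
  rw [comp_betaMap]
  have h := equiv_el hu (t ≫ prod.fst ≫ prod.fst)
    (t ≫ prod.fst ≫ prod.snd)
    (actEl Xa (ginv (t ≫ prod.fst ≫ prod.fst)) (t ≫ prod.snd))
  rw [actEl_mul, g_mul_inv, actEl_one] at h
  rw [← h]
  congr 1
  apply Limits.prod.hom_ext <;> simp [actEl] <;> simp only [← Category.assoc, lift_proj]

/-- L8: the retraction lemma for equivariant maps out of `Z × (G × Y)`. -/
lemma theta_id {Z : GObject Gr} {Y S : C} {w : Z.X ⨯ (Gr.G ⨯ Y) ⟶ S}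
    (hw : productAction Gr Z (freeGObject Gr Y) ≫ w = prod.snd ≫ w) :
    alphaMap Z Y ≫ gammaMap Gr Z.X Y ≫ prod.map Z.act (𝟙 (Gr.G ⨯ Y)) ≫ w = w := by
  apply ext_el; intro W t
  simp only [← Category.assoc]
  rw [comp_alphaMap, comp_gammaMap]
  simp only [prod.lift_fst, prod.lift_snd]
  have step : (prod.lift (prod.lift (gone Gr W)
        (actEl Z (ginv (t ≫ prod.snd ≫ prod.fst)) (t ≫ prod.fst)))
        (prod.lift (gone Gr W) (t ≫ prod.snd ≫ prod.snd))) ≫ prod.map Z.act (𝟙 (Gr.G ⨯ Y))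
      = prod.lift (actEl Z (ginv (t ≫ prod.snd ≫ prod.fst)) (t ≫ prod.fst))
          (prod.lift (gone Gr W) (t ≫ prod.snd ≫ prod.snd)) := by
    apply Limits.prod.hom_ext
    · simp only [Category.assoc, prod.map_fst, prod.lift_fst_assoc, prod.lift_fst]
      exact actEl_one Z _
    · simp [prod.comp_lift]
  rw [step]
  have h := equiv_el_free hw (t ≫ prod.snd ≫ prod.fst)
    (actEl Z (ginv (t ≫ prod.snd ≫ prod.fst)) (t ≫ prod.fst))
    (prod.lift (gone Gr W) (t ≫ prod.snd ≫ prod.snd))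
  simp only [actEl_mul, g_mul_inv, actEl_one, prod.lift_fst, prod.lift_snd, g_mul_one] at h
  rw [← h]
  congr 1
  apply Limits.prod.hom_ext
  · simp
  · apply Limits.prod.hom_ext <;> simp

end Aux3


section Main

variable {Gr}

/-- Naturality of `gammaMap`. -/
lemma gamma_natural {c c' : C} (f : c' ⟶ c) (Y : C) :
    gammaMap Gr c' Y ≫ prod.map (prod.map (𝟙 Gr.G) f) (𝟙 (Gr.G ⨯ Y))
      = prod.map f (𝟙 Y) ≫ gammaMap Gr c Y := by
  apply ext_el; intro W t
  simp only [← Category.assoc]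
  rw [comp_gammaMap, comp_gammaMap]
  apply Limits.prod.hom_ext <;> apply Limits.prod.hom_ext <;> simp [prod.comp_lift]

/-- Compatibility of `alphaMap` with a morphism `h : Y ⟶ Y'`. -/
lemma alpha_hom (Z : GObject Gr) {Y Y' : C} (h : Y ⟶ Y') :
    alphaMap Z Y ≫ prod.map (𝟙 Z.X) h
      = prod.map (𝟙 Z.X) (prod.map (𝟙 Gr.G) h) ≫ alphaMap Z Y' := by
  apply ext_el; intro W t
  simp only [← Category.assoc]
  rw [comp_alphaMap]
  rw [show t ≫ prod.map (𝟙 Z.X) (prod.map (𝟙 Gr.G) h)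
      = prod.lift (t ≫ prod.fst) (prod.lift (t ≫ prod.snd ≫ prod.fst)
          (t ≫ prod.snd ≫ prod.snd ≫ h)) by
    apply Limits.prod.hom_ext <;> [skip; apply Limits.prod.hom_ext] <;> simp [prod.comp_lift]]
  rw [comp_alphaMap]
  apply Limits.prod.hom_ext <;> simp [prod.comp_lift]

/-- The counit `G × Z → Z` as a `G`-homomorphism from the free object. -/
noncomputable def counitG (Z : GObject Gr) : freeGObject Gr Z.X ⟶ Z where
  f := Z.act
  equivariant := by
    show ((prod.associator Gr.G Gr.G Z.X).inv ≫ prod.map Gr.m (𝟙 Z.X)) ≫ Z.act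
      = prod.map (𝟙 Gr.G) Z.act ≫ Z.act
    rw [Z.act_mul, Category.assoc]

/-- Forward map: from `S^X ⟶ S^Y` to equivariant presheaf morphisms. -/
noncomputable def Efun (S : C) (Xa : GObject Gr) (Y : C)
    (δ : pow S Xa.X ⟶ pow S Y) : gpow Gr S Xa ⟶ gpow Gr S (freeGObject Gr Y) where
  app Z := TypeCat.ofHom fun u => ⟨alphaMap Z.unop Y ≫ δ.app (Opposite.op Z.unop.X) u.1, by
    erw [← Category.assoc, alpha_equiv, Category.assoc]; exact rfl⟩
  naturality Z W g := by
    ext u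
    apply Subtype.ext
    show alphaMap W.unop Y ≫ δ.app (Opposite.op W.unop.X) (prod.map g.unop.f (𝟙 Xa.X) ≫ u.1)
      = prod.map g.unop.f (𝟙 (Gr.G ⨯ Y)) ≫ alphaMap Z.unop Y ≫ δ.app (Opposite.op Z.unop.X) u.1
    have hnat := types_congr_hom (δ.naturality g.unop.f.op) u.1
    have hnat' : δ.app (Opposite.op W.unop.X) (prod.map g.unop.f (𝟙 Xa.X) ≫ u.1)
        = prod.map g.unop.f (𝟙 Y) ≫ δ.app (Opposite.op Z.unop.X) u.1 := hnat
    erw [hnat', ← Category.assoc, ← alpha_natural g.unop Y, Category.assoc]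

/-- Backward map. -/
noncomputable def Dfun (S : C) (Xa : GObject Gr) (Y : C)
    (ε : gpow Gr S Xa ⟶ gpow Gr S (freeGObject Gr Y)) : pow S Xa.X ⟶ pow S Y where
  app c := TypeCat.ofHom fun u => gammaMap Gr c.unop Y ≫
    (ε.app (Opposite.op (freeGObject Gr c.unop)) ⟨betaMap c.unop Xa ≫ u, by
      erw [← Category.assoc, beta_equiv, Category.assoc]; exact rfl⟩).1
  naturality c c' f := by
    ext u
    simp only [types_comp_apply]
    dsimp only [pow]
    have harg : (⟨betaMap c'.unop Xa ≫ prod.map f.unop (𝟙 Xa.X) ≫ u, by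
          erw [← Category.assoc, beta_equiv, Category.assoc]; exact rfl⟩ :
            (gpow Gr S Xa).obj (Opposite.op (freeGObject Gr c'.unop)))
        = (gpow Gr S Xa).map (freeGHom Gr f.unop).op
            ⟨betaMap c.unop Xa ≫ u, by
              erw [← Category.assoc, beta_equiv, Category.assoc]; exact rfl⟩ := by
      apply Subtype.ext
      show betaMap c'.unop Xa ≫ prod.map f.unop (𝟙 Xa.X) ≫ u
        = prod.map (prod.map (𝟙 Gr.G) f.unop) (𝟙 Xa.X) ≫ betaMap c.unop Xa ≫ u
      erw [← Category.assoc, ← Category.assoc, ← beta_natural f.unop Xa]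
    have hnat := types_congr_hom (ε.naturality (freeGHom Gr f.unop).op)
      (⟨betaMap c.unop Xa ≫ u, by
        erw [← Category.assoc, beta_equiv, Category.assoc]; exact rfl⟩ :
          (gpow Gr S Xa).obj (Opposite.op (freeGObject Gr c.unop)))
    have key : ((ε.app (Opposite.op (freeGObject Gr c'.unop))
          ⟨betaMap c'.unop Xa ≫ prod.map f.unop (𝟙 Xa.X) ≫ u, by
            erw [← Category.assoc, beta_equiv, Category.assoc]; exact rfl⟩).1 : _ ⟶ S)
        = prod.map (prod.map (𝟙 Gr.G) f.unop) (𝟙 (Gr.G ⨯ Y)) ≫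
            (ε.app (Opposite.op (freeGObject Gr c.unop)) ⟨betaMap c.unop Xa ≫ u, by
              erw [← Category.assoc, beta_equiv, Category.assoc]; exact rfl⟩).1 := by
      rw [harg]
      exact congrArg Subtype.val hnat
    show gammaMap Gr c'.unop Y ≫ (ε.app (Opposite.op (freeGObject Gr c'.unop))
          ⟨betaMap c'.unop Xa ≫ prod.map f.unop (𝟙 Xa.X) ≫ u, by
            erw [← Category.assoc, beta_equiv, Category.assoc]; exact rfl⟩).1
        = prod.map f.unop (𝟙 Y) ≫ gammaMap Gr c.unop Y ≫
            (ε.app (Opposite.op (freeGObject Gr c.unop)) ⟨betaMap c.unop Xa ≫ u, by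
              erw [← Category.assoc, beta_equiv, Category.assoc]; exact rfl⟩).1
    erw [key, ← Category.assoc, gamma_natural f.unop Y, Category.assoc]

lemma left_inv_ED (S : C) (Xa : GObject Gr) (Y : C) (δ : pow S Xa.X ⟶ pow S Y) :
    Dfun S Xa Y (Efun S Xa Y δ) = δ := by
  apply NatTrans.ext; funext c; ext u
  show gammaMap Gr c.unop Y ≫ alphaMap (freeGObject Gr c.unop) Y ≫
      δ.app (Opposite.op (freeGObject Gr c.unop).X) (betaMap c.unop Xa ≫ u) = δ.app c u
  have hnat := types_congr_hom (δ.naturality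
    ((prod.lift (gone Gr c.unop) (𝟙 c.unop)) ≫
        (𝟙 (Gr.G ⨯ c.unop))).op) (betaMap c.unop Xa ≫ u)
  have hnat' : δ.app c (prod.map (prod.lift (gone Gr c.unop) (𝟙 c.unop) ≫ 𝟙 _)
        (𝟙 Xa.X) ≫ betaMap c.unop Xa ≫ u)
      = prod.map (prod.lift (gone Gr c.unop) (𝟙 c.unop) ≫ 𝟙 _) (𝟙 Y) ≫
          δ.app (Opposite.op (freeGObject Gr c.unop).X) (betaMap c.unop Xa ≫ u) := hnat
  rw [Category.comp_id] at hnat'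
  erw [← Category.assoc, gamma_alpha, ← hnat', ← Category.assoc, beta_section,
    Category.id_comp]

lemma right_inv_ED (S : C) (Xa : GObject Gr) (Y : C)
    (ε : gpow Gr S Xa ⟶ gpow Gr S (freeGObject Gr Y)) :
    Efun S Xa Y (Dfun S Xa Y ε) = ε := by
  apply NatTrans.ext; funext Z; ext u
  apply Subtype.ext
  show alphaMap Z.unop Y ≫ gammaMap Gr Z.unop.X Y ≫
      (ε.app (Opposite.op (freeGObject Gr Z.unop.X)) ⟨betaMap Z.unop.X Xa ≫ u.1, by
        erw [← Category.assoc, beta_equiv, Category.assoc]; exact rfl⟩).1 = (ε.app Z u).1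
  have harg : (⟨betaMap Z.unop.X Xa ≫ u.1, by
        erw [← Category.assoc, beta_equiv, Category.assoc]; exact rfl⟩ :
          (gpow Gr S Xa).obj (Opposite.op (freeGObject Gr Z.unop.X)))
      = (gpow Gr S Xa).map (counitG Z.unop).op u := by
    apply Subtype.ext
    show betaMap Z.unop.X Xa ≫ u.1 = prod.map Z.unop.act (𝟙 Xa.X) ≫ u.1
    exact beta_act u.2
  have hnat := types_congr_hom (ε.naturality (counitG Z.unop).op) u
  have key : ((ε.app (Opposite.op (freeGObject Gr Z.unop.X))
        ⟨betaMap Z.unop.X Xa ≫ u.1, by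
          erw [← Category.assoc, beta_equiv, Category.assoc]; exact rfl⟩).1 : _ ⟶ S)
      = prod.map Z.unop.act (𝟙 (Gr.G ⨯ Y)) ≫ (ε.app Z u).1 := by
    rw [harg]
    exact congrArg Subtype.val hnat
  rw [key]
  exact theta_id (ε.app Z u).2

/-- The bijection. -/
noncomputable def powEquiv (S : C) (Xa : GObject Gr) (Y : C) :
    (pow S Xa.X ⟶ pow S Y) ≃ (gpow Gr S Xa ⟶ gpow Gr S (freeGObject Gr Y)) where
  toFun := Efun S Xa Y
  invFun := Dfun S Xa Y
  left_inv := left_inv_ED S Xa Y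
  right_inv := right_inv_ED S Xa Y

end Main

/-- For any object `Y` of `C` and any `G`-object `(X, a)`, there is a bijection, natural
in `Y` and `(X,a)`, between natural transformations `S^X ⟶ S^Y` of presheaves on `C` and
natural transformations `(S,π₂)^{(X,a)} ⟶ (S,π₂)^{(G × Y, m × Id_Y)}` of presheaves
on `[G, C]`. -/
theorem gpow_free_bijection (Gr : GroupObject C) (S : C) :
    ∃ e : ∀ (Xa : GObject Gr) (Y : C),
        (pow S Xa.X ⟶ pow S Y) ≃ (gpow Gr S Xa ⟶ gpow Gr S (freeGObject Gr Y)),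
      (∀ (Xa : GObject Gr) {Y Y' : C} (h : Y ⟶ Y') (δ : pow S Xa.X ⟶ pow S Y'),
          e Xa Y (δ ≫ powMap S h) = e Xa Y' δ ≫ gpowMap Gr S (freeGHom Gr h)) ∧
      (∀ {Xa Xa' : GObject Gr} (k : Xa ⟶ Xa') (Y : C) (δ : pow S Xa.X ⟶ pow S Y),
          e Xa' Y (powMap S k.f ≫ δ) = gpowMap Gr S k ≫ e Xa Y δ) := by
  refine ⟨fun Xa Y => powEquiv S Xa Y, ?_, ?_⟩
  · intro Xa Y Y' h δ
    apply NatTrans.ext; funext Z; ext u; apply Subtype.ext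
    show alphaMap Z.unop Y ≫ prod.map (𝟙 Z.unop.X) h ≫ δ.app (Opposite.op Z.unop.X) u.1
      = prod.map (𝟙 Z.unop.X) (prod.map (𝟙 Gr.G) h) ≫
          alphaMap Z.unop Y' ≫ δ.app (Opposite.op Z.unop.X) u.1
    erw [← Category.assoc, alpha_hom, Category.assoc]
  · intro Xa Xa' k Y δ
    apply NatTrans.ext; funext Z; ext u; apply Subtype.ext
    rfl
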